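/- Let G₁ and G₂ be finite groups. The Radon transform is not injective on the direct product G₁ × G₂ if and only if the Radon transform is not injective on G₁, the Radon transform is not injective on G₂, and the orders |G₁| and |G₂| are coprime. -/

import Mathlib

/-- The Radon transform of `f` at `(x, γ)`: the sum of `f` over the geodesic
determined by the homomorphism `γ : C_n → G`, translated by `x`. -/
noncomputable def radonSum {G : Type*} [Group G] {n : ℕ} [NeZero n]
    (f : G → ℂ) (γ : Multiplicative (ZMod n) →* G) (x : G) : ℂ :=
  ∑ t : ZMod n, f (x * γ (Multiplicative.ofAdd t))

/-- All Radon transforms of `f` (over geodesics of all lengths `n ≥ 2`) vanish. -/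
def RadonNull (G : Type*) [Group G] (f : G → ℂ) : Prop :=
  ∀ (n : ℕ) (hn : 2 ≤ n) (γ : Multiplicative (ZMod n) →* G), γ ≠ 1 → ∀ x : G,
    haveI : NeZero n := ⟨by omega⟩
    radonSum f γ x = 0

/-- The Radon transform is injective on `G`. -/
def RadonInjective (G : Type*) [Group G] : Prop :=
  ∀ f : G → ℂ, RadonNull G f → f = 0
open Finset Multiplicative

section Aux
variable {G : Type*} [Group G]

/-- The homomorphism `ZMod n → G` sending `1` to `g`, given `g ^ n = 1`. -/
def zmodHom (n : ℕ) [NeZero n] (g : G) (hg : g ^ n = 1) : Multiplicative (ZMod n) →* G :=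
  MonoidHom.mk' (fun t => g ^ (t.toAdd).val) (by
    intro a b
    have hd : orderOf g ∣ n := orderOf_dvd_of_pow_eq_one hg
    simp only [toAdd_mul]
    rw [← pow_add, pow_eq_pow_iff_modEq, ZMod.val_add]
    exact (Nat.mod_modEq _ n).of_dvd hd)

lemma zmodHom_apply (n : ℕ) [NeZero n] (g : G) (hg : g ^ n = 1) (t : ZMod n) :
    zmodHom n g hg (ofAdd t) = g ^ t.val := rfl

lemma zmodHom_ne_one (n : ℕ) [NeZero n] (hn : 2 ≤ n) {g : G} (hg1 : g ≠ 1)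
    (hg : g ^ n = 1) : zmodHom n g hg ≠ 1 := by
  intro h
  apply hg1
  have h1 : zmodHom n g hg (ofAdd 1) = 1 := by rw [h]; rfl
  haveI : Fact (1 < n) := ⟨hn⟩
  rwa [zmodHom_apply, ZMod.val_one, pow_one] at h1

lemma hom_apply_eq {n : ℕ} [NeZero n] (γ : Multiplicative (ZMod n) →* G) (t : ZMod n) :
    γ (ofAdd t) = γ (ofAdd (1 : ZMod n)) ^ t.val := by
  rw [← map_pow]
  congr 1
  rw [← ofAdd_nsmul]
  congr 1
  rw [nsmul_eq_mul, mul_one, ZMod.natCast_val, ZMod.cast_id]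

lemma hom_one_pow {n : ℕ} [NeZero n] (γ : Multiplicative (ZMod n) →* G) :
    γ (ofAdd (1 : ZMod n)) ^ n = 1 := by
  rw [← map_pow, ← ofAdd_nsmul, nsmul_eq_mul, mul_one, ZMod.natCast_self, ofAdd_zero, map_one]

lemma hom_eq_one {n : ℕ} [NeZero n] (γ : Multiplicative (ZMod n) →* G)
    (h : γ (ofAdd (1 : ZMod n)) = 1) : γ = 1 := by
  refine MonoidHom.ext fun a => ?_
  rw [show a = ofAdd a.toAdd from rfl, hom_apply_eq, h, one_pow, MonoidHom.one_apply]

lemma radonSum_eq {n : ℕ} [NeZero n] (f : G → ℂ) (γ : Multiplicative (ZMod n) →* G) (x : G) :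
    radonSum f γ x = ∑ t : ZMod n, f (x * γ (ofAdd (1 : ZMod n)) ^ t.val) :=
  Finset.sum_congr rfl fun t _ => by rw [hom_apply_eq]

lemma sum_zmod (n : ℕ) [NeZero n] (F : ℕ → ℂ) :
    ∑ t : ZMod n, F t.val = ∑ i ∈ Finset.range n, F i := by
  refine Finset.sum_nbij' (fun t => t.val) (fun i => (i : ZMod n)) ?_ ?_ ?_ ?_ ?_
  · intro a _; exact Finset.mem_range.2 (ZMod.val_lt a)
  · intro a _; exact Finset.mem_univ _
  · intro a _; exact ZMod.natCast_zmod_val a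
  · intro a ha; exact ZMod.val_cast_of_lt (Finset.mem_range.1 ha)
  · intro a _; rfl

lemma sum_periodic (h : ℕ → ℂ) (M k : ℕ) (hp : ∀ t, h (t + M) = h t) :
    ∑ i ∈ Finset.range (M * k), h i = k * ∑ i ∈ Finset.range M, h i := by
  have key : ∀ k i, h (i + M * k) = h i := by
    intro k
    induction k with
    | zero => simp
    | succ k ih =>
      intro i
      rw [Nat.mul_succ, ← Nat.add_assoc, hp, ih]
  induction k with
  | zero => simp
  | succ k ih =>
    rw [Nat.mul_succ, Finset.sum_range_add, ih]
    have : ∀ i ∈ Finset.range M, h (M * k + i) = h i := by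
      intro i _
      rw [Nat.add_comm, key]
    rw [Finset.sum_congr rfl this]
    push_cast
    ring

end Aux

open Finset Multiplicative in
lemma radonNull_prod {G₁ G₂ : Type*} [Group G₁] [Group G₂] [Fintype G₁] [Fintype G₂]
    (f₁ : G₁ → ℂ) (f₂ : G₂ → ℂ) (h₁ : RadonNull G₁ f₁) (h₂ : RadonNull G₂ f₂)
    (hco : Nat.Coprime (Fintype.card G₁) (Fintype.card G₂)) :
    RadonNull (G₁ × G₂) (fun p => f₁ p.1 * f₂ p.2) := by
  intro n hn γ hγ x
  haveI : NeZero n := ⟨by omega⟩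
  set g : G₁ × G₂ := γ (ofAdd (1 : ZMod n)) with hg
  have hgn : g ^ n = 1 := hom_one_pow γ
  have hg₁n : g.1 ^ n = 1 := by rw [← Prod.pow_fst, hgn]; rfl
  have hg₂n : g.2 ^ n = 1 := by rw [← Prod.pow_snd, hgn]; rfl
  set m₁ := orderOf g.1 with hm₁def
  set m₂ := orderOf g.2 with hm₂def
  have hm₁pos : 0 < m₁ := orderOf_pos g.1
  have hm₂pos : 0 < m₂ := orderOf_pos g.2
  haveI : NeZero m₁ := ⟨hm₁pos.ne'⟩
  haveI : NeZero m₂ := ⟨hm₂pos.ne'⟩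
  haveI : NeZero (m₁ * m₂) := ⟨(Nat.mul_pos hm₁pos hm₂pos).ne'⟩
  have hcop : Nat.Coprime m₁ m₂ :=
    ((hco.coprime_dvd_left orderOf_dvd_card).coprime_dvd_right orderOf_dvd_card)
  have hMn : m₁ * m₂ ∣ n :=
    hcop.mul_dvd_of_dvd_of_dvd (orderOf_dvd_of_pow_eq_one hg₁n) (orderOf_dvd_of_pow_eq_one hg₂n)
  obtain ⟨k, hk⟩ := hMn
  -- the summand as a function of a natural number exponent
  set h : ℕ → ℂ := fun i => f₁ (x.1 * g.1 ^ i) * f₂ (x.2 * g.2 ^ i) with hdef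
  have hper : ∀ i, h (i + m₁ * m₂) = h i := by
    intro i
    have e₁ : g.1 ^ (m₁ * m₂) = 1 := by
      rw [pow_mul, pow_orderOf_eq_one, one_pow]
    have e₂ : g.2 ^ (m₁ * m₂) = 1 := by
      rw [mul_comm, pow_mul, pow_orderOf_eq_one, one_pow]
    simp [hdef, pow_add, e₁, e₂]
  have step1 : radonSum (fun p : G₁ × G₂ => f₁ p.1 * f₂ p.2) γ x
      = ∑ t : ZMod n, h t.val := by
    rw [radonSum_eq]
    refine Finset.sum_congr rfl fun t _ => ?_
    simp [hdef, Prod.pow_fst, Prod.pow_snd]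
    rfl
  rw [step1, sum_zmod, hk, sum_periodic h (m₁*m₂) k hper, ← sum_zmod (m₁*m₂) h]
  -- now factor via CRT
  set F₁ : ZMod m₁ → ℂ := fun a => f₁ (x.1 * g.1 ^ a.val) with hF₁
  set F₂ : ZMod m₂ → ℂ := fun b => f₂ (x.2 * g.2 ^ b.val) with hF₂
  have hsplit : ∀ t : ZMod (m₁ * m₂),
      h t.val = F₁ ((t.val : ZMod m₁)) * F₂ ((t.val : ZMod m₂)) := by
    intro t
    have e₁ : g.1 ^ ((t.val : ZMod m₁)).val = g.1 ^ t.val := by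
      rw [pow_eq_pow_iff_modEq, ZMod.val_natCast]
      exact Nat.mod_modEq _ _
    have e₂ : g.2 ^ ((t.val : ZMod m₂)).val = g.2 ^ t.val := by
      rw [pow_eq_pow_iff_modEq, ZMod.val_natCast]
      exact Nat.mod_modEq _ _
    show f₁ (x.1 * g.1 ^ t.val) * f₂ (x.2 * g.2 ^ t.val)
        = f₁ (x.1 * g.1 ^ ((t.val : ZMod m₁)).val) * f₂ (x.2 * g.2 ^ ((t.val : ZMod m₂)).val)
    rw [e₁, e₂]
  rw [Finset.sum_congr rfl fun t _ => hsplit t]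
  have crt : ∑ t : ZMod (m₁ * m₂), F₁ ((t.val : ZMod m₁)) * F₂ ((t.val : ZMod m₂))
      = ∑ p : ZMod m₁ × ZMod m₂, F₁ p.1 * F₂ p.2 := by
    have := Equiv.sum_comp (ZMod.chineseRemainder hcop).toEquiv
      (fun p : ZMod m₁ × ZMod m₂ => F₁ p.1 * F₂ p.2)
    rw [← this]
    refine Finset.sum_congr rfl fun t _ => ?_
    have key : (ZMod.chineseRemainder hcop).toEquiv t = ((t.val : ZMod m₁), (t.val : ZMod m₂)) := by
      have e0 : (ZMod.chineseRemainder hcop).toEquiv t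
          = ZMod.castHom (show Nat.lcm m₁ m₂ ∣ m₁ * m₂ by simp [Nat.lcm_dvd_iff])
            (ZMod m₁ × ZMod m₂) t := rfl
      rw [e0, ZMod.castHom_apply, ← ZMod.natCast_val]
      exact Prod.ext (Prod.fst_natCast _) (Prod.snd_natCast _)
    rw [key]
  rw [crt, Fintype.sum_prod_type, ← Finset.sum_mul_sum]
  have hcase : (∑ a : ZMod m₁, F₁ a) = 0 ∨ (∑ b : ZMod m₂, F₂ b) = 0 := by
    by_cases hg1 : g.1 = 1
    · right
      have hg2 : g.2 ≠ 1 := by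
        intro hg2
        exact hγ (hom_eq_one γ (by rw [← hg]; exact Prod.ext hg1 hg2))
      have hm2ne : m₂ ≠ 1 := fun e => hg2 (orderOf_eq_one_iff.1 e)
      have hm2 : 2 ≤ m₂ := by omega
      have h0 := h₂ m₂ hm2 (zmodHom m₂ g.2 (pow_orderOf_eq_one g.2))
        (zmodHom_ne_one m₂ hm2 hg2 _) x.2
      exact h0
    · left
      have hm1ne : m₁ ≠ 1 := fun e => hg1 (orderOf_eq_one_iff.1 e)
      have hm1 : 2 ≤ m₁ := by omega
      have h0 := h₁ m₁ hm1 (zmodHom m₁ g.1 (pow_orderOf_eq_one g.1))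
        (zmodHom_ne_one m₁ hm1 hg1 _) x.1
      exact h0
  rcases hcase with h0 | h0 <;> rw [h0] <;> ring

open Finset Multiplicative in
lemma radonInjective_of_prime {G₁ G₂ : Type*} [Group G₁] [Group G₂]
    (p : ℕ) (hp : p.Prime) (g₁ : G₁) (hg₁ : orderOf g₁ = p)
    (g₂ : G₂) (hg₂ : orderOf g₂ = p) : RadonInjective (G₁ × G₂) := by
  haveI : Fact p.Prime := ⟨hp⟩
  haveI : NeZero p := ⟨hp.ne_zero⟩
  have hp2 : 2 ≤ p := hp.two_le
  haveI : Fact (1 < p) := ⟨hp.one_lt⟩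
  have hg₁p : g₁ ^ p = 1 := by rw [← hg₁]; exact pow_orderOf_eq_one g₁
  have hg₂p : g₂ ^ p = 1 := by rw [← hg₂]; exact pow_orderOf_eq_one g₂
  have hg₁ne : g₁ ≠ 1 := fun e => hp.one_lt.ne' (hg₁ ▸ e ▸ orderOf_one)
  have hg₂ne : g₂ ≠ 1 := fun e => hp.one_lt.ne' (hg₂ ▸ e ▸ orderOf_one)
  intro f hf
  funext q
  obtain ⟨x, y⟩ := q
  show f (x, y) = 0
  -- the "vertical" geodesics: sums of f over {x'} × (coset of ⟨g₂⟩) vanish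
  have hinf : ((1 : G₁), g₂) ^ p = 1 := by
    rw [Prod.pow_mk, one_pow, hg₂p]; rfl
  have key2 : ∀ x' : G₁, ∀ y' : G₂, ∑ c : ZMod p, f (x', y' * g₂ ^ c.val) = 0 := by
    intro x' y'
    have hne : ((1 : G₁), g₂) ≠ 1 := fun e => hg₂ne (congrArg Prod.snd e)
    have h0 := hf p hp2 (zmodHom p ((1 : G₁), g₂) hinf)
      (zmodHom_ne_one p hp2 hne hinf) (x', y')
    rw [← h0]
    show _ = ∑ c : ZMod p, f ((x', y') * (zmodHom p ((1 : G₁), g₂) hinf) (ofAdd c))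
    refine Finset.sum_congr rfl fun c _ => ?_
    rw [zmodHom_apply, Prod.pow_mk, one_pow, Prod.mk_mul_mk, mul_one]
  -- the "slanted" geodesics
  have key1 : ∀ j : ZMod p,
      ∑ t : ZMod p, f (x * g₁ ^ t.val, y * g₂ ^ (j * t).val) = 0 := by
    intro j
    have hj : (g₁, g₂ ^ j.val) ^ p = 1 := by
      rw [Prod.pow_mk, hg₁p, ← pow_mul, mul_comm, pow_mul, hg₂p, one_pow]; rfl
    have hne : (g₁, g₂ ^ j.val) ≠ 1 := fun e => hg₁ne (congrArg Prod.fst e)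
    have h0 := hf p hp2 (zmodHom p (g₁, g₂ ^ j.val) hj)
      (zmodHom_ne_one p hp2 hne hj) (x, y)
    rw [← h0]
    show _ = ∑ t : ZMod p, f ((x, y) * (zmodHom p (g₁, g₂ ^ j.val) hj) (ofAdd t))
    refine Finset.sum_congr rfl fun t _ => ?_
    rw [zmodHom_apply, Prod.pow_mk, Prod.mk_mul_mk, ← pow_mul]
    have hexp : g₂ ^ (j * t).val = g₂ ^ (j.val * t.val) := by
      rw [pow_eq_pow_iff_modEq, hg₂, ZMod.val_mul]
      exact Nat.mod_modEq _ p
    rw [hexp]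
  have T : ∑ t : ZMod p, ∑ j : ZMod p,
      f (x * g₁ ^ t.val, y * g₂ ^ (j * t).val) = 0 := by
    rw [Finset.sum_comm]
    exact Finset.sum_eq_zero fun j _ => key1 j
  have inner_ne : ∀ t : ZMod p, t ≠ 0 →
      ∑ j : ZMod p, f (x * g₁ ^ t.val, y * g₂ ^ (j * t).val) = 0 := by
    intro t ht
    have := Equiv.sum_comp (Equiv.mulRight₀ t ht)
      (fun c : ZMod p => f (x * g₁ ^ t.val, y * g₂ ^ c.val))
    simp only [Equiv.mulRight₀_apply] at this
    rw [show (∑ j : ZMod p, f (x * g₁ ^ t.val, y * g₂ ^ (j * t).val))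
        = ∑ j : ZMod p, (fun c : ZMod p => f (x * g₁ ^ t.val, y * g₂ ^ c.val)) (j * t)
        from rfl, this]
    exact key2 _ y
  have inner_zero : ∑ j : ZMod p, f (x * g₁ ^ (0 : ZMod p).val, y * g₂ ^ (j * 0).val)
      = (p : ℂ) * f (x, y) := by
    simp [ZMod.val_zero, ZMod.card]
  have Tsingle : ∑ t : ZMod p, ∑ j : ZMod p,
      f (x * g₁ ^ t.val, y * g₂ ^ (j * t).val) = (p : ℂ) * f (x, y) := by
    rw [Finset.sum_eq_single (0 : ZMod p)
      (fun b _ hb => inner_ne b hb) (fun h => absurd (Finset.mem_univ _) h)]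
    exact inner_zero
  rw [Tsingle] at T
  have hpne : (p : ℂ) ≠ 0 := Nat.cast_ne_zero.2 hp.ne_zero
  exact (mul_eq_zero.1 T).resolve_left hpne

open Finset Multiplicative in
theorem radon_product (G₁ G₂ : Type*) [Group G₁] [Group G₂] [Fintype G₁] [Fintype G₂] :
    ¬ RadonInjective (G₁ × G₂) ↔
      ¬ RadonInjective G₁ ∧ ¬ RadonInjective G₂ ∧
        Nat.Coprime (Fintype.card G₁) (Fintype.card G₂) := by
  constructor
  · intro h
    rw [RadonInjective] at h
    push_neg at h
    obtain ⟨f, hnull, hf0⟩ := h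
    obtain ⟨⟨x₀, y₀⟩, hxy⟩ := Function.ne_iff.1 hf0
    refine ⟨?_, ?_, ?_⟩
    · intro hinj
      have hz : (fun x : G₁ => f (x, y₀)) = 0 := by
        apply hinj
        intro n hn γ hγ x
        haveI : NeZero n := ⟨by omega⟩
        have hne : γ.prod 1 ≠ (1 : Multiplicative (ZMod n) →* G₁ × G₂) := by
          intro e
          apply hγ
          ext a
          exact congrArg Prod.fst (DFunLike.congr_fun e a)
        have h0 := hnull n hn (γ.prod 1) hne (x, y₀)
        rw [← h0]
        show _ = ∑ t : ZMod n, f ((x, y₀) * ((γ.prod 1) (ofAdd t)))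
        refine Finset.sum_congr rfl fun t _ => ?_
        rw [MonoidHom.prod_apply, MonoidHom.one_apply, Prod.mk_mul_mk, mul_one]
      exact hxy (congrFun hz x₀)
    · intro hinj
      have hz : (fun y : G₂ => f (x₀, y)) = 0 := by
        apply hinj
        intro n hn γ hγ y
        haveI : NeZero n := ⟨by omega⟩
        have hne : (MonoidHom.prod 1 γ) ≠ (1 : Multiplicative (ZMod n) →* G₁ × G₂) := by
          intro e
          apply hγ
          ext a
          exact congrArg Prod.snd (DFunLike.congr_fun e a)
        have h0 := hnull n hn (MonoidHom.prod 1 γ) hne (x₀, y)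
        rw [← h0]
        show _ = ∑ t : ZMod n, f ((x₀, y) * ((MonoidHom.prod 1 γ) (ofAdd t)))
        refine Finset.sum_congr rfl fun t _ => ?_
        rw [MonoidHom.prod_apply, MonoidHom.one_apply, Prod.mk_mul_mk, mul_one]
      exact hxy (congrFun hz y₀)
    · by_contra hnc
      obtain ⟨p, hp, hpd⟩ := Nat.exists_prime_and_dvd hnc
      haveI : Fact p.Prime := ⟨hp⟩
      have hpd₁ : p ∣ Fintype.card G₁ := hpd.trans (Nat.gcd_dvd_left _ _)
      have hpd₂ : p ∣ Fintype.card G₂ := hpd.trans (Nat.gcd_dvd_right _ _)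
      obtain ⟨g₁, hg₁⟩ := exists_prime_orderOf_dvd_card p hpd₁
      obtain ⟨g₂, hg₂⟩ := exists_prime_orderOf_dvd_card p hpd₂
      exact hf0 (radonInjective_of_prime p hp g₁ hg₁ g₂ hg₂ f hnull)
  · rintro ⟨h1, h2, hco⟩
    rw [RadonInjective] at h1 h2 ⊢
    push_neg at h1 h2 ⊢
    obtain ⟨f₁, hn1, hf1⟩ := h1
    obtain ⟨f₂, hn2, hf2⟩ := h2
    refine ⟨fun q => f₁ q.1 * f₂ q.2, radonNull_prod f₁ f₂ hn1 hn2 hco, ?_⟩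
    obtain ⟨x₀, hx₀⟩ := Function.ne_iff.1 hf1
    obtain ⟨y₀, hy₀⟩ := Function.ne_iff.1 hf2
    intro e
    exact (mul_ne_zero hx₀ hy₀) (congrFun e (x₀, y₀))
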